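/- Let F be a field, and let C be the chain complex over F[U] that is free with basis x_0, …, x_n (n even), graded so that x_k has homological degree m_k, with differential ∂x_{2k−1} = U^{α_{2k−2}−α_{2k−1}} x_{2k−2} + x_{2k} for 1 ≤ 2k−1 ≤ n and ∂x_{2k} = 0, where (α_k) is a strictly decreasing integer sequence and the exponents α_{2k−2} − α_{2k−1} are positive. Then the homology H(C), as an F[U]-module, has free part of rank one; that is, H(C) ⊗_{F[U]} F[U, U^{−1}] is one-dimensional over F[U, U^{−1}]. -/
import Mathlib

open Polynomial

set_option synthInstance.maxHeartbeats 400000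

namespace ModelComplexAux

variable {F : Type*} [Field F]

def coef (α : ℕ → ℤ) (k : ℕ) : ℕ := (α (2 * k) - α (2 * k + 1)).toNat

def sexp (α : ℕ → ℤ) (k : ℕ) : ℕ := ∑ j ∈ Finset.range k, coef α j

lemma sexp_succ (α : ℕ → ℤ) (k : ℕ) : sexp α (k + 1) = sexp α k + coef α k :=
  Finset.sum_range_succ _ k

lemma sexp_mono (α : ℕ → ℤ) {a b : ℕ} (h : a ≤ b) : sexp α a ≤ sexp α b :=
  Finset.sum_le_sum_of_subset (Finset.range_subset_range.2 h)

/-- totalized coordinate access -/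
noncomputable def ext (m : ℕ) (f : Fin (m + m + 1) → Polynomial F) (i : ℕ) : Polynomial F :=
  if h : i < m + m + 1 then f ⟨i, h⟩ else 0

noncomputable def sing (F : Type*) [Field F] (m : ℕ) (i : ℕ) : Fin (m + m + 1) → Polynomial F :=
  if h : i < m + m + 1 then Pi.single ⟨i, h⟩ (1 : Polynomial F) else 0

variable {m : ℕ}

lemma ext_apply (f : Fin (m + m + 1) → Polynomial F) {i : ℕ} (h : i < m + m + 1) :
    ext m f i = f ⟨i, h⟩ := dif_pos h

lemma ext_coe (f : Fin (m + m + 1) → Polynomial F) (j : Fin (m + m + 1)) :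
    ext m f (j : ℕ) = f j := ext_apply f j.isLt

lemma ext_apply_ge (f : Fin (m + m + 1) → Polynomial F) {i : ℕ} (h : ¬ i < m + m + 1) :
    ext m f i = 0 := dif_neg h

lemma ext_add (f g : Fin (m + m + 1) → Polynomial F) (i : ℕ) :
    ext m (f + g) i = ext m f i + ext m g i := by
  unfold ext; split <;> simp

lemma ext_smul (r : Polynomial F) (f : Fin (m + m + 1) → Polynomial F) (i : ℕ) :
    ext m (r • f) i = r * ext m f i := by
  unfold ext; split <;> simp

lemma ext_sum {ι : Type*} (s : Finset ι) (f : ι → Fin (m + m + 1) → Polynomial F) (i : ℕ) :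
    ext m (∑ j ∈ s, f j) i = ∑ j ∈ s, ext m (f j) i := by
  unfold ext; split <;> simp

lemma sing_apply (i : ℕ) (j : Fin (m + m + 1)) :
    sing F m i j = if (j : ℕ) = i then 1 else 0 := by
  unfold sing
  split
  · rename_i h
    rw [Pi.single_apply]
    congr 1
    simp [Fin.ext_iff]
  · rename_i h
    rw [if_neg (by omega), Pi.zero_apply]

lemma ext_sing (i j : ℕ) :
    ext m (sing F m i) j = if j = i ∧ i < m + m + 1 then 1 else 0 := by
  by_cases hj : j < m + m + 1
  · rw [ext_apply _ hj, sing_apply]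
    by_cases h : j = i
    · subst h; simp [hj]
    · simp [h]
  · rw [ext_apply_ge _ hj]
    rw [if_neg (by omega)]

lemma sum_range_odd {M : Type*} [AddCommMonoid M] (h : ℕ → M) (t : ℕ)
    (h0 : ∀ k, h (2 * k) = 0) :
    ∑ i ∈ Finset.range (2 * t + 1), h i = ∑ k ∈ Finset.range t, h (2 * k + 1) := by
  induction t with
  | zero => simpa using h0 0
  | succ t ih =>
      rw [show 2 * (t + 1) + 1 = (2 * t + 1) + 1 + 1 by ring, Finset.sum_range_succ,
        Finset.sum_range_succ, ih, Finset.sum_range_succ,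
        show 2 * t + 1 + 1 = 2 * (t + 1) by ring, h0 (t + 1), add_zero]

lemma sum_delta {β : Type*} [AddCommMonoid β] {t : ℕ} (A : ℕ → β) {i : ℕ} :
    (∑ k ∈ Finset.range t, if i = k then A k else 0) = if i < t then A i else 0 := by
  rw [Finset.sum_ite_eq]; simp [Finset.mem_range]


noncomputable def Dmap (α : ℕ → ℤ) (m : ℕ) :
    (Fin (m + m + 1) → Polynomial F) →ₗ[Polynomial F] (Fin (m + m + 1) → Polynomial F) where
  toFun f := ∑ k ∈ Finset.range m,
    ext m f (2 * k + 1) • ((X : Polynomial F) ^ coef α k • sing F m (2 * k) + sing F m (2 * k + 2))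
  map_add' f g := by
    simp only [ext_add, add_smul, Finset.sum_add_distrib]
  map_smul' r f := by
    simp only [ext_smul, RingHom.id_apply, Finset.smul_sum, mul_smul]

lemma Dmap_apply (α : ℕ → ℤ) (f : Fin (m + m + 1) → Polynomial F) :
    Dmap α m f = ∑ k ∈ Finset.range m,
      ext m f (2 * k + 1) • ((X : Polynomial F) ^ coef α k • sing F m (2 * k) + sing F m (2 * k + 2)) := rfl

lemma Dmap_coord (α : ℕ → ℤ) (f : Fin (m + m + 1) → Polynomial F) (j : Fin (m + m + 1)) :
    Dmap α m f j = ∑ k ∈ Finset.range m,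
      ext m f (2 * k + 1) * ((X : Polynomial F) ^ coef α k * (if (j : ℕ) = 2 * k then 1 else 0) +
        (if (j : ℕ) = 2 * k + 2 then 1 else 0)) := by
  rw [Dmap_apply, Finset.sum_apply]
  refine Finset.sum_congr rfl fun k _ => ?_
  simp [sing_apply, smul_eq_mul]

lemma ext_Dmap_odd (α : ℕ → ℤ) (f : Fin (m + m + 1) → Polynomial F) (k : ℕ) :
    ext m (Dmap α m f) (2 * k + 1) = 0 := by
  by_cases h : 2 * k + 1 < m + m + 1
  · rw [ext_apply _ h, Dmap_coord]
    refine Finset.sum_eq_zero fun k' _ => ?_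
    rw [if_neg (by simp; omega), if_neg (by simp; omega), mul_zero, add_zero, mul_zero]
  · exact ext_apply_ge _ h

lemma Dmap_Dmap (α : ℕ → ℤ) (f : Fin (m + m + 1) → Polynomial F) :
    Dmap α m (Dmap α m f) = 0 := by
  rw [Dmap_apply (f := Dmap α m f)]
  refine Finset.sum_eq_zero fun k _ => ?_
  rw [ext_Dmap_odd, zero_smul]

lemma ker_odd (α : ℕ → ℤ) (f : Fin (m + m + 1) → Polynomial F) (hf : Dmap α m f = 0) :
    ∀ k : ℕ, ext m f (2 * k + 1) = 0 := by
  suffices H : ∀ t k, m ≤ k + t → ext m f (2 * k + 1) = 0 by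
    intro k; exact H m k (by omega)
  intro t
  induction t with
  | zero =>
      intro k hk
      exact ext_apply_ge _ (by omega)
  | succ t ih =>
      intro k hk
      by_cases h1 : m ≤ k + t
      · exact ih k h1
      · have hkm : k < m := by omega
        have h2 : Dmap α m f ⟨2 * k + 2, by omega⟩ = 0 := by rw [hf]; rfl
        rw [Dmap_coord] at h2
        have h3 : ∀ k' ∈ Finset.range m,
            ext m f (2 * k' + 1) * ((X : Polynomial F) ^ coef α k' *
              (if ((⟨2 * k + 2, by omega⟩ : Fin (m + m + 1)) : ℕ) = 2 * k' then 1 else 0) +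
              (if ((⟨2 * k + 2, by omega⟩ : Fin (m + m + 1)) : ℕ) = 2 * k' + 2 then 1 else 0)) =
            (if k + 1 = k' then (X : Polynomial F) ^ coef α k' * ext m f (2 * k' + 1) else 0) +
            (if k = k' then ext m f (2 * k' + 1) else 0) := by
          intro k' _
          simp only [Fin.val_mk]
          by_cases e1 : k + 1 = k'
          · subst e1
            rw [if_pos (by omega), if_neg (by omega), if_pos rfl, if_neg (by omega)]
            ring
          · rw [if_neg (by omega), if_neg e1]
            by_cases e2 : k = k'
            · subst e2
              rw [if_pos (by omega), if_pos rfl]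
              ring
            · rw [if_neg (by omega), if_neg e2]
              ring
        rw [Finset.sum_congr rfl h3, Finset.sum_add_distrib, sum_delta, sum_delta] at h2
        rw [if_pos (by omega : k < m)] at h2
        by_cases h4 : k + 1 < m
        · rw [if_pos h4, ih (k + 1) (by omega), mul_zero, zero_add] at h2
          exact h2
        · rw [if_neg h4, zero_add] at h2
          exact h2

noncomputable def phiL (α : ℕ → ℤ) (m : ℕ) :
    (Fin (m + m + 1) → Polynomial F) →ₗ[Polynomial F] Polynomial F where
  toFun f := ∑ k ∈ Finset.range (m + 1),
    (-1 : Polynomial F) ^ k * X ^ sexp α k * ext m f (2 * k)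
  map_add' f g := by
    simp only [ext_add, mul_add, Finset.sum_add_distrib]
  map_smul' r f := by
    simp only [ext_smul, RingHom.id_apply, smul_eq_mul, Finset.mul_sum]
    exact Finset.sum_congr rfl fun k _ => by ring

lemma phiL_apply (α : ℕ → ℤ) (f : Fin (m + m + 1) → Polynomial F) :
    phiL α m f = ∑ k ∈ Finset.range (m + 1),
      (-1 : Polynomial F) ^ k * X ^ sexp α k * ext m f (2 * k) := rfl

lemma phiL_rv (α : ℕ → ℤ) {k : ℕ} (hk : k < m) :
    phiL α m ((X : Polynomial F) ^ coef α k • sing F m (2 * k) + sing F m (2 * k + 2)) = 0 := by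
  rw [phiL_apply]
  have h3 : ∀ k' ∈ Finset.range (m + 1),
      (-1 : Polynomial F) ^ k' * X ^ sexp α k' *
        ext m ((X : Polynomial F) ^ coef α k • sing F m (2 * k) + sing F m (2 * k + 2)) (2 * k') =
      (if k = k' then (-1 : Polynomial F) ^ k' * X ^ sexp α k' * X ^ coef α k else 0) +
      (if k + 1 = k' then (-1 : Polynomial F) ^ k' * X ^ sexp α k' else 0) := by
    intro k' _
    rw [ext_add, ext_smul, ext_sing, ext_sing]
    by_cases e1 : k = k'
    · subst e1
      rw [if_pos ⟨rfl, by omega⟩, if_neg (by omega), if_pos rfl, if_neg (by omega)]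
      ring
    · rw [if_neg (show ¬(2 * k' = 2 * k ∧ 2 * k < m + m + 1) by omega), if_neg e1]
      by_cases e2 : k + 1 = k'
      · subst e2
        rw [if_pos (show 2 * (k + 1) = 2 * k + 2 ∧ 2 * k + 2 < m + m + 1 by omega), if_pos rfl]
        ring
      · rw [if_neg (show ¬(2 * k' = 2 * k + 2 ∧ 2 * k + 2 < m + m + 1) by omega), if_neg e2]
        ring
  rw [Finset.sum_congr rfl h3, Finset.sum_add_distrib, sum_delta, sum_delta,
    if_pos (by omega : k < m + 1), if_pos (by omega : k + 1 < m + 1)]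
  rw [pow_succ, sexp_succ, pow_add]
  ring

lemma phiL_Dmap (α : ℕ → ℤ) (f : Fin (m + m + 1) → Polynomial F) :
    phiL α m (Dmap α m f) = 0 := by
  rw [Dmap_apply, map_sum]
  refine Finset.sum_eq_zero fun k hk => ?_
  rw [map_smul, phiL_rv α (Finset.mem_range.mp hk), smul_zero]

lemma phiL_sing0 (α : ℕ → ℤ) : phiL α m (sing F m 0) = 1 := by
  rw [phiL_apply]
  have h3 : ∀ k' ∈ Finset.range (m + 1),
      (-1 : Polynomial F) ^ k' * X ^ sexp α k' * ext m (sing F m 0) (2 * k') =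
      (if 0 = k' then (1 : Polynomial F) else 0) := by
    intro k' _
    rw [ext_sing]
    by_cases e1 : (0 : ℕ) = k'
    · subst e1
      rw [if_pos ⟨rfl, by omega⟩, if_pos rfl]
      simp [sexp]
    · rw [if_neg (by omega), if_neg e1, mul_zero]
  rw [Finset.sum_congr rfl h3, sum_delta, if_pos (by omega : 0 < m + 1)]
noncomputable def cc (α : ℕ → ℤ) (m : ℕ) (f : Fin (m + m + 1) → Polynomial F) (k : ℕ) :
    Polynomial F :=
  ∑ i ∈ Finset.range (m - k),
    (-1 : Polynomial F) ^ i * X ^ (sexp α (k + 1 + i) - sexp α (k + 1)) * ext m f (2 * (k + 1 + i))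

lemma cc_top (α : ℕ → ℤ) (f : Fin (m + m + 1) → Polynomial F) : cc α m f m = 0 := by
  simp [cc]

lemma cc_rec (α : ℕ → ℤ) (f : Fin (m + m + 1) → Polynomial F) {t : ℕ} (ht : t + 1 ≤ m) :
    cc α m f t = ext m f (2 * (t + 1)) - X ^ coef α (t + 1) * cc α m f (t + 1) := by
  unfold cc
  rw [show m - t = (m - (t + 1)) + 1 by omega, Finset.sum_range_succ']
  have h2 : ∀ i ∈ Finset.range (m - (t + 1)),
      (-1 : Polynomial F) ^ (i + 1) * X ^ (sexp α (t + 1 + (i + 1)) - sexp α (t + 1)) *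
        ext m f (2 * (t + 1 + (i + 1))) =
      -((X : Polynomial F) ^ coef α (t + 1) *
        ((-1 : Polynomial F) ^ i * X ^ (sexp α (t + 1 + 1 + i) - sexp α (t + 1 + 1)) *
          ext m f (2 * (t + 1 + 1 + i)))) := by
    intro i _
    rw [show t + 1 + (i + 1) = t + 1 + 1 + i by ring]
    have e1 : sexp α (t + 1 + 1 + i) - sexp α (t + 1) =
        coef α (t + 1) + (sexp α (t + 1 + 1 + i) - sexp α (t + 1 + 1)) := by
      have h3 := sexp_succ α (t + 1)
      have h4 := sexp_mono α (show t + 1 + 1 ≤ t + 1 + 1 + i by omega)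
      omega
    rw [e1, pow_add, pow_succ]
    ring
  rw [Finset.sum_congr rfl h2, Finset.sum_neg_distrib, ← Finset.mul_sum]
  simp only [pow_zero, Nat.add_zero, Nat.sub_self, one_mul, mul_one]
  ring
lemma cc_zero (α : ℕ → ℤ) (f : Fin (m + m + 1) → Polynomial F)
    (hphi : phiL α m f = 0) :
    (X : Polynomial F) ^ coef α 0 * cc α m f 0 = ext m f 0 := by
  have h0 : phiL α m f = ∑ k ∈ Finset.range m,
      (-1 : Polynomial F) ^ (k + 1) * X ^ sexp α (k + 1) * ext m f (2 * (k + 1)) + ext m f 0 := by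
    rw [phiL_apply, Finset.sum_range_succ']
    simp [sexp]
  have h1 : (X : Polynomial F) ^ coef α 0 * cc α m f 0 =
      ∑ k ∈ Finset.range m, (-1 : Polynomial F) ^ k * X ^ sexp α (k + 1) * ext m f (2 * (k + 1)) := by
    unfold cc
    rw [Finset.mul_sum, Nat.sub_zero]
    refine Finset.sum_congr rfl fun i _ => ?_
    rw [show (0 : ℕ) + 1 + i = i + 1 by omega]
    have e1 : coef α 0 + (sexp α (i + 1) - sexp α (0 + 1)) = sexp α (i + 1) := by
      have h3 := sexp_succ α 0
      have h4 := sexp_mono α (show 0 + 1 ≤ i + 1 by omega)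
      have h5 : sexp α 0 = 0 := by simp [sexp]
      omega
    calc (X : Polynomial F) ^ coef α 0 *
        ((-1 : Polynomial F) ^ i * X ^ (sexp α (i + 1) - sexp α (0 + 1)) * ext m f (2 * (i + 1))) =
        (-1 : Polynomial F) ^ i * X ^ (coef α 0 + (sexp α (i + 1) - sexp α (0 + 1))) *
          ext m f (2 * (i + 1)) := by rw [pow_add]; ring
      _ = (-1 : Polynomial F) ^ i * X ^ sexp α (i + 1) * ext m f (2 * (i + 1)) := by rw [e1]
  rw [h0] at hphi
  rw [h1]
  have h2 : ∑ k ∈ Finset.range m, (-1 : Polynomial F) ^ (k + 1) * X ^ sexp α (k + 1) *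
      ext m f (2 * (k + 1)) =
      -∑ k ∈ Finset.range m, (-1 : Polynomial F) ^ k * X ^ sexp α (k + 1) * ext m f (2 * (k + 1)) := by
    rw [← Finset.sum_neg_distrib]
    exact Finset.sum_congr rfl fun k _ => by rw [pow_succ]; ring
  rw [h2] at hphi
  linear_combination -hphi
lemma sing_coe (j : Fin (m + m + 1)) : sing F m (j : ℕ) = Pi.single j (1 : Polynomial F) :=
  dif_pos j.isLt

lemma exact_lemma (α : ℕ → ℤ) (f : Fin (m + m + 1) → Polynomial F)
    (hker : Dmap α m f = 0) (hphi : phiL α m f = 0) :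
    Dmap α m (∑ k ∈ Finset.range m, cc α m f k • sing F m (2 * k + 1)) = f := by
  set g : Fin (m + m + 1) → Polynomial F :=
    ∑ k ∈ Finset.range m, cc α m f k • sing F m (2 * k + 1) with hgdef
  have hg : ∀ k, k < m → ext m g (2 * k + 1) = cc α m f k := by
    intro k hk
    rw [hgdef, ext_sum]
    have h3 : ∀ k' ∈ Finset.range m, ext m (cc α m f k' • sing F m (2 * k' + 1)) (2 * k + 1) =
        if k = k' then cc α m f k' else 0 := by
      intro k' hk'
      have hk'' := Finset.mem_range.mp hk'
      rw [ext_smul, ext_sing]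
      by_cases e1 : k = k'
      · subst e1
        rw [if_pos ⟨rfl, by omega⟩, if_pos rfl, mul_one]
      · rw [if_neg (show ¬(2 * k + 1 = 2 * k' + 1 ∧ 2 * k' + 1 < m + m + 1) by omega),
          if_neg e1, mul_zero]
    rw [Finset.sum_congr rfl h3, sum_delta, if_pos hk]
  funext j
  rw [Dmap_coord]
  rcases Nat.even_or_odd (j : ℕ) with he | ho
  · -- even coordinate
    obtain ⟨t', ht'⟩ := he
    have htm : t' + t' ≤ m + m := by have := j.isLt; omega
    set t := t' with htdef
    have ht : (j : ℕ) = 2 * t := by omega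
    have htm2 : t ≤ m := by omega
    have hfj : f j = ext m f (2 * t) := by rw [← ext_coe f j, ht]
    rw [hfj]
    by_cases ht0 : t = 0
    · -- t = 0
      have h3 : ∀ k ∈ Finset.range m,
          ext m g (2 * k + 1) * ((X : Polynomial F) ^ coef α k *
            (if ((j : ℕ)) = 2 * k then 1 else 0) + (if ((j : ℕ)) = 2 * k + 2 then 1 else 0)) =
          (if 0 = k then (X : Polynomial F) ^ coef α 0 * cc α m f 0 else 0) := by
        intro k hk
        have hkm := Finset.mem_range.mp hk
        rw [hg k hkm, ht, ht0]
        by_cases e1 : 0 = k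
        · subst e1
          rw [if_pos rfl, if_neg (by omega), if_pos rfl]
          ring
        · rw [if_neg (by omega), if_neg (by omega), if_neg e1]
          ring
      rw [Finset.sum_congr rfl h3, sum_delta, ht0]
      by_cases hm : 0 < m
      · rw [if_pos hm, cc_zero α f hphi]
      · rw [if_neg hm]
        have hm0 : m = 0 := by omega
        have h5 := cc_zero α f hphi
        subst hm0
        rw [cc_top, mul_zero] at h5
        rw [show 2 * 0 = 0 by ring, ← h5]
    · -- 1 ≤ t
      have ht1 : 1 ≤ t := by omega
      have h3 : ∀ k ∈ Finset.range m,
          ext m g (2 * k + 1) * ((X : Polynomial F) ^ coef α k *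
            (if ((j : ℕ)) = 2 * k then 1 else 0) + (if ((j : ℕ)) = 2 * k + 2 then 1 else 0)) =
          (if t = k then (X : Polynomial F) ^ coef α k * cc α m f k else 0) +
          (if t - 1 = k then cc α m f k else 0) := by
        intro k hk
        have hkm := Finset.mem_range.mp hk
        rw [hg k hkm, ht]
        by_cases e1 : t = k
        · subst e1
          rw [if_pos rfl, if_neg (by omega), if_pos rfl, if_neg (by omega)]
          ring
        · rw [if_neg (show ¬2 * t = 2 * k by omega), if_neg e1]
          by_cases e2 : t - 1 = k
          · rw [if_pos (show 2 * t = 2 * k + 2 by omega), if_pos e2]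
            ring
          · rw [if_neg (show ¬2 * t = 2 * k + 2 by omega), if_neg e2]
            ring
      rw [Finset.sum_congr rfl h3, Finset.sum_add_distrib, sum_delta, sum_delta,
        if_pos (show t - 1 < m by omega)]
      have hrec := cc_rec α f (show (t - 1) + 1 ≤ m by omega)
      rw [show t - 1 + 1 = t by omega] at hrec
      by_cases htm' : t < m
      · rw [if_pos htm', hrec]
        ring
      · rw [if_neg htm', hrec, show t = m by omega, cc_top]
        ring
  · -- odd coordinate
    obtain ⟨t, ht⟩ := ho
    have hfj : f j = ext m f (2 * t + 1) := by rw [← ext_coe f j, ht]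
    rw [hfj, ker_odd α f hker t]
    refine Finset.sum_eq_zero fun k _ => ?_
    rw [ht, if_neg (by omega), if_neg (by omega)]
    ring

lemma d_eq_Dmap (α : ℕ → ℤ)
    (d : (Fin (m + m + 1) → Polynomial F) →ₗ[Polynomial F] (Fin (m + m + 1) → Polynomial F))
    (hde : ∀ k : ℕ, d (sing F m (2 * k)) = 0)
    (hdo : ∀ k : ℕ, k < m → d (sing F m (2 * k + 1)) =
      (X : Polynomial F) ^ coef α k • sing F m (2 * k) + sing F m (2 * k + 2)) :
    d = Dmap α m := by
  apply LinearMap.ext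
  intro f
  have hf : f = ∑ j : Fin (m + m + 1),
      f j • (Pi.single j (1 : Polynomial F) : Fin (m + m + 1) → Polynomial F) := by
    have h1 : ∀ j : Fin (m + m + 1),
        f j • (Pi.single j (1 : Polynomial F) : Fin (m + m + 1) → Polynomial F) =
        Pi.single j (f j) := by
      intro j
      rw [← Pi.single_smul, smul_eq_mul, mul_one]
    rw [Finset.sum_congr rfl (fun j _ => h1 j), Finset.univ_sum_single]
  calc d f = ∑ j : Fin (m + m + 1), f j • d (Pi.single j (1 : Polynomial F)) := by
        conv_lhs => rw [hf]
        rw [map_sum]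
        exact Finset.sum_congr rfl fun j _ => by rw [map_smul]
    _ = ∑ i ∈ Finset.range (m + m + 1), ext m f i • d (sing F m i) := by
        rw [← Fin.sum_univ_eq_sum_range (fun i => ext m f i • d (sing F m i)) (m + m + 1)]
        exact Finset.sum_congr rfl fun j _ => by rw [ext_coe, sing_coe]
    _ = ∑ i ∈ Finset.range (2 * m + 1), ext m f i • d (sing F m i) := by
        exact Finset.sum_congr (by rw [two_mul]) fun _ _ => rfl
    _ = ∑ k ∈ Finset.range m, ext m f (2 * k + 1) • d (sing F m (2 * k + 1)) :=
        sum_range_odd _ m (fun k => by rw [hde k, smul_zero])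
    _ = Dmap α m f := by
        rw [Dmap_apply]
        exact Finset.sum_congr rfl fun k hk => by rw [hdo k (Finset.mem_range.mp hk)]
end ModelComplexAux
set_option maxHeartbeats 1000000 in
open ModelComplexAux in
/-- The model complex of an L-space knot: the free `F[U]`-complex on `x_0, …, x_n` (`n` even)
with `∂x_{2k+1} = U^{α_{2k} - α_{2k+1}} x_{2k} + x_{2k+2}` and `∂x_{2k} = 0`, where `(α_k)`
is strictly decreasing, has homology whose free part has rank one: after inverting `U`, the
homology becomes one-dimensional over `F[U, U⁻¹]`. -/
theorem model_complex_rank_one (F : Type*) [Field F] (n : ℕ) (hn : Even n)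
    (α : ℕ → ℤ) (hα : ∀ k, α (k + 1) < α k)
    (d : (Fin (n + 1) → Polynomial F) →ₗ[Polynomial F] (Fin (n + 1) → Polynomial F))
    (hodd : ∀ (k : ℕ) (hk : 2 * k + 1 ≤ n),
      d (Pi.single (⟨2 * k + 1, by omega⟩ : Fin (n + 1)) (1 : Polynomial F)) =
        (X : Polynomial F) ^ (α (2 * k) - α (2 * k + 1)).toNat •
            (Pi.single (⟨2 * k, by omega⟩ : Fin (n + 1)) (1 : Polynomial F)
              : Fin (n + 1) → Polynomial F) +
          Pi.single (⟨2 * k + 2, by obtain ⟨m, hm⟩ := hn; omega⟩ : Fin (n + 1))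
            (1 : Polynomial F))
    (heven : ∀ (k : ℕ) (hk : 2 * k ≤ n),
      d (Pi.single (⟨2 * k, by omega⟩ : Fin (n + 1)) (1 : Polynomial F)) = 0) :
    LinearMap.range d ≤ LinearMap.ker d ∧
    Module.rank (Localization (Submonoid.powers (X : Polynomial F)))
      (LocalizedModule (Submonoid.powers (X : Polynomial F))
        ((LinearMap.ker d) ⧸
          (LinearMap.range d).comap (LinearMap.ker d).subtype)) = 1 := by
  obtain ⟨m, rfl⟩ := hn
  have hde : ∀ k : ℕ, d (sing F m (2 * k)) = 0 := by
    intro k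
    by_cases h : 2 * k < m + m + 1
    · rw [show sing F m (2 * k) = Pi.single (⟨2 * k, h⟩ : Fin (m + m + 1)) 1 from dif_pos h]
      exact heven k (by omega)
    · rw [show sing F m (2 * k) = 0 from dif_neg h, map_zero]
  have hdo : ∀ k : ℕ, k < m → d (sing F m (2 * k + 1)) =
      (X : Polynomial F) ^ coef α k • sing F m (2 * k) + sing F m (2 * k + 2) := by
    intro k hk
    rw [show sing F m (2 * k + 1) =
        Pi.single (⟨2 * k + 1, by omega⟩ : Fin (m + m + 1)) 1 from dif_pos (by omega),
      show sing F m (2 * k) =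
        Pi.single (⟨2 * k, by omega⟩ : Fin (m + m + 1)) 1 from dif_pos (by omega),
      show sing F m (2 * k + 2) =
        Pi.single (⟨2 * k + 2, by omega⟩ : Fin (m + m + 1)) 1 from dif_pos (by omega)]
    exact hodd k (by omega)
  have hd : d = Dmap α m := d_eq_Dmap α d hde hdo
  constructor
  · rintro x ⟨y, rfl⟩
    rw [LinearMap.mem_ker, hd]
    exact Dmap_Dmap α y
  · set S := Submonoid.powers (X : Polynomial F) with hS
    set Φ : LinearMap.ker d →ₗ[Polynomial F] Polynomial F :=
      (phiL α m).comp (LinearMap.ker d).subtype with hΦ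
    have hsurj : Function.Surjective Φ := by
      intro p
      refine ⟨⟨p • sing F m 0, ?_⟩, ?_⟩
      · rw [LinearMap.mem_ker, map_smul, show (0 : ℕ) = 2 * 0 by norm_num, hde 0, smul_zero]
      · show phiL α m (p • sing F m 0) = p
        rw [map_smul, phiL_sing0, smul_eq_mul, mul_one]
    have hkerΦ : LinearMap.ker Φ = (LinearMap.range d).comap (LinearMap.ker d).subtype := by
      ext x
      simp only [LinearMap.mem_ker, Submodule.mem_comap, LinearMap.mem_range,
        LinearMap.coe_comp, Function.comp_apply, Submodule.coe_subtype, hΦ]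
      have hdapp : ∀ g, d g = Dmap α m g := fun g => LinearMap.congr_fun hd g
      constructor
      · intro h
        have hx : Dmap α m (x : Fin (m + m + 1) → Polynomial F) = 0 := by
          rw [← hd]; exact x.2
        refine ⟨∑ k ∈ Finset.range m,
          cc α m (x : Fin (m + m + 1) → Polynomial F) k • sing F m (2 * k + 1), ?_⟩
        exact (hdapp _).trans
          (exact_lemma α (x : Fin (m + m + 1) → Polynomial F) hx h)
      · rintro ⟨y, hy⟩
        rw [← hy, hdapp y]
        exact phiL_Dmap α y
    let eH : ((LinearMap.ker d) ⧸ (LinearMap.range d).comap (LinearMap.ker d).subtype)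
        ≃ₗ[Polynomial F] Polynomial F :=
      (Submodule.quotEquivOfEq _ _ hkerΦ.symm).trans (Φ.quotKerEquivOfSurjective hsurj)
    have hSle : S ≤ nonZeroDivisors (Polynomial F) := by
      intro x hx
      obtain ⟨k, rfl⟩ := hx
      exact mem_nonZeroDivisors_of_ne_zero (pow_ne_zero _ X_ne_zero)
    haveI : IsDomain (Localization S) := IsLocalization.isDomain_localization hSle
    haveI hinst : IsLocalizedModule S
        ((Algebra.linearMap (Polynomial F) (Localization S)) ∘ₗ
          eH.toLinearMap) := by
      infer_instance
    let e0 : LocalizedModule S ((LinearMap.ker d) ⧸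
          (LinearMap.range d).comap (LinearMap.ker d).subtype)
        ≃ₗ[Polynomial F] Localization S :=
      IsLocalizedModule.iso S ((Algebra.linearMap (Polynomial F) (Localization S)) ∘ₗ
        eH.toLinearMap)
    let e1 : LocalizedModule S ((LinearMap.ker d) ⧸
          (LinearMap.range d).comap (LinearMap.ker d).subtype)
        ≃ₗ[Localization S] Localization S :=
      { e0.toLinearMap.extendScalarsOfIsLocalization S (Localization S) with
        invFun := e0.symm
        left_inv := e0.left_inv
        right_inv := e0.right_inv }
    rw [e1.rank_eq, Module.rank_self]
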